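/- For s ∈ (1, c₂) with f_n(s) well defined, the identity (f_n(s) − 1)/(s − 1) = m^n · Π_{k=0}^{n−1} [1 + ε(f_k(s))/m] holds, where ε(s) := (f(s) − 1)/(s − 1) − m; consequently (f_n(s) − 1)/(m^n(s − 1)) is monotone increasing in n. -/

import Mathlib

open MeasureTheory Filter Topology

noncomputable def genFun (p : ℕ → ℝ) (s : ℝ) : ℝ := ∑' j, p j * s ^ j

noncomputable def genFunIter (p : ℕ → ℝ) : ℕ → ℝ → ℝ
  | 0, s => s
  | n + 1, s => genFun p (genFunIter p n s)

/-- for `s ∈ (1, c₂)` (with `1 < f_n(s) ≤ s` for all `n`, the generating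
function having radius of convergence beyond `c₂`), the identity
`(f_n(s) - 1)/(s - 1) = m^n ∏_{k=0}^{n-1} (1 + ε(f_k(s))/m)` holds, where
`ε(t) = (f(t) - 1)/(t - 1) - m`; consequently `(f_n(s) - 1)/(m^n (s-1))` is monotone
increasing in `n`. -/
theorem stmt8 (p : ℕ → ℝ) (m c₂ s : ℝ)
    (hp_nonneg : ∀ j, 0 ≤ p j) (hp_sum : ∑' j, p j = 1)
    (hm : m = ∑' j : ℕ, (j : ℝ) * p j)
    (hm_summable : Summable fun j : ℕ => (j : ℝ) * p j)
    (hm_pos : 0 < m) (hm_lt : m < 1)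
    (hc₂ : 1 < c₂) (hs : s ∈ Set.Ioo (1 : ℝ) c₂)
    (hconv : ∀ t ∈ Set.Icc (1 : ℝ) c₂, Summable fun j : ℕ => p j * t ^ j)
    (hiter : ∀ n : ℕ, 1 < genFunIter p n s ∧ genFunIter p n s ≤ s) :
    (∀ n : ℕ, (genFunIter p n s - 1) / (s - 1)
        = m ^ n * ∏ k ∈ Finset.range n,
            (1 + ((genFun p (genFunIter p k s) - 1) / (genFunIter p k s - 1) - m) / m)) ∧
      Monotone fun n : ℕ => (genFunIter p n s - 1) / (m ^ n * (s - 1)) := by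
  obtain ⟨hs1, hs2⟩ := hs
  have hm_ne : m ≠ 0 := ne_of_gt hm_pos
  have hsum1 : Summable p := by
    have := hconv 1 ⟨le_refl 1, le_of_lt hc₂⟩
    simpa using this
  have key : ∀ t : ℝ, 1 ≤ t → t ≤ c₂ → m * (t - 1) ≤ genFun p t - 1 := by
    intro t ht1 ht2
    have hst : Summable fun j : ℕ => p j * t ^ j := hconv t ⟨ht1, ht2⟩
    have hsub : Summable fun j : ℕ => p j * t ^ j - p j := hst.sub hsum1
    have h1 : genFun p t - 1 = ∑' j, (p j * t ^ j - p j) := by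
      rw [genFun, ← hp_sum]
      exact (Summable.tsum_sub hst hsum1).symm
    have h2 : m * (t - 1) = ∑' j : ℕ, (j : ℝ) * p j * (t - 1) := by
      rw [tsum_mul_right, ← hm]
    rw [h1, h2]
    refine Summable.tsum_le_tsum ?_ (hm_summable.mul_right _) hsub
    intro j
    have hb : 1 + (j : ℝ) * (t - 1) ≤ t ^ j := by
      have := one_add_mul_le_pow (by linarith : (-2:ℝ) ≤ t - 1) j
      simpa using this
    nlinarith [hp_nonneg j, mul_le_mul_of_nonneg_left hb (hp_nonneg j)]
  have ht1 : ∀ k, 1 < genFunIter p k s := fun k => (hiter k).1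
  have hts : ∀ k, genFunIter p k s ≤ s := fun k => (hiter k).2
  have htc : ∀ k, genFunIter p k s ≤ c₂ := fun k => le_of_lt (lt_of_le_of_lt (hts k) hs2)
  have hs' : s - 1 ≠ 0 := by linarith
  have hfac : ∀ k, 1 + ((genFun p (genFunIter p k s) - 1) / (genFunIter p k s - 1) - m) / m
      = (genFun p (genFunIter p k s) - 1) / (m * (genFunIter p k s - 1)) := by
    intro k
    have hk : genFunIter p k s - 1 ≠ 0 := by
      have := ht1 k; intro h; linarith [sub_eq_zero.mp h]
    field_simp
    ring
  have hfacge : ∀ k, (1:ℝ) ≤ 1 + ((genFun p (genFunIter p k s) - 1) / (genFunIter p k s - 1) - m) / m := by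
    intro k
    rw [hfac k]
    have h1 := ht1 k
    have hk := key _ (le_of_lt (ht1 k)) (htc k)
    have hpos : 0 < m * (genFunIter p k s - 1) := mul_pos hm_pos (by linarith)
    rw [le_div_iff₀ hpos]
    linarith
  have hid : ∀ n : ℕ, (genFunIter p n s - 1) / (s - 1)
      = m ^ n * ∏ k ∈ Finset.range n,
          (1 + ((genFun p (genFunIter p k s) - 1) / (genFunIter p k s - 1) - m) / m) := by
    intro n
    induction n with
    | zero => simp [genFunIter, div_self hs']
    | succ n ih =>
      rw [Finset.prod_range_succ, hfac n]
      have hk : genFunIter p n s - 1 ≠ 0 := by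
        have := ht1 n; intro h; linarith [sub_eq_zero.mp h]
      have step : genFunIter p (n+1) s = genFun p (genFunIter p n s) := rfl
      rw [step]
      have haux : ∀ P F T : ℝ, T ≠ 0 →
          m ^ (n+1) * (P * (F / (m * T))) = m ^ n * P * (F / T) := by
        intro P F T hT
        field_simp
        ring
      rw [haux _ _ _ hk, ← ih]
      field_simp
  refine ⟨hid, ?_⟩
  have heq : ∀ n : ℕ, (genFunIter p n s - 1) / (m ^ n * (s - 1))
      = ∏ k ∈ Finset.range n,
          (1 + ((genFun p (genFunIter p k s) - 1) / (genFunIter p k s - 1) - m) / m) := by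
    intro n
    have hmn : (m : ℝ) ^ n ≠ 0 := pow_ne_zero n hm_ne
    rw [mul_comm, ← div_div, hid n, mul_comm, mul_div_assoc, div_self hmn, mul_one]
  intro a b hab
  simp only [heq]
  rw [← Finset.prod_range_mul_prod_Ico _ hab]
  have h1 : (1:ℝ) ≤ ∏ k ∈ Finset.Ico a b,
      (1 + ((genFun p (genFunIter p k s) - 1) / (genFunIter p k s - 1) - m) / m) := by
    calc (1:ℝ) = ∏ k ∈ Finset.Ico a b, 1 := by simp
    _ ≤ _ := Finset.prod_le_prod (by intros; norm_num) (fun i _ => hfacge i)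
  have h0 : 0 ≤ ∏ k ∈ Finset.range a,
      (1 + ((genFun p (genFunIter p k s) - 1) / (genFunIter p k s - 1) - m) / m) :=
    Finset.prod_nonneg (fun i _ => by linarith [hfacge i])
  exact le_mul_of_one_le_right h0 h1
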